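/- arXiv:1109.0450 — 3 statements merged into one kernel-verified Lean document; each statement's English description precedes it below -/
import Mathlib

section
/- Let A be a positive definite bounded operator and B a positive semidefinite bounded operator on a complex Hilbert space H. Let m, k be positive integers, t ∈ [0,1], and r ∈ ℝ. Then the map x ↦ A^{r/2} ( A^{-t/2} (A + xB)^m A^{-t/2} )^{k} A^{r/2} (with m and k integer powers) is differentiable at x = 0 in operator norm, and its derivative at 0 equals A^{r/2} · { Σ_{i=1}^{k} A^{(m-t)(k-i)} · [ A^{-t/2} ( Σ_{j=1}^{m} A^{m-j} B A^{j-1} ) A^{-t/2} ] · A^{(m-t)(i-1)} } · A^{r/2}. -/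
open Finset in
/-- Derivative of a power in a (possibly noncommutative) normed ring. -/
lemma hasDerivAt_pow_nc {𝔸 : Type*} [NormedRing 𝔸] [NormedAlgebra ℝ 𝔸]
    {f : ℝ → 𝔸} {f' : 𝔸} {x : ℝ} (hf : HasDerivAt f f' x) (n : ℕ) :
    HasDerivAt (fun y => f y ^ n)
      (∑ i ∈ Finset.range n, f x ^ i * f' * f x ^ (n - 1 - i)) x := by
  induction n with
  | zero => simpa using hasDerivAt_const x (1 : 𝔸)
  | succ n ih =>
    have h := ih.mul hf
    have hfun : (fun y => f y ^ n * f y) = fun y => f y ^ (n + 1) := by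
      funext y; rw [← pow_succ]
    change HasDerivAt (fun y => f y ^ n * f y) _ x at h
    rw [hfun] at h
    have hsum : (∑ i ∈ Finset.range (n + 1), f x ^ i * f' * f x ^ (n + 1 - 1 - i))
        = (∑ i ∈ Finset.range n, f x ^ i * f' * f x ^ (n - 1 - i)) * f x + f x ^ n * f' := by
      rw [Finset.sum_range_succ, Finset.sum_mul]
      congr 1
      · refine Finset.sum_congr rfl fun i hi => ?_
        rw [Finset.mem_range] at hi
        rw [show n + 1 - 1 - i = (n - 1 - i) + 1 by omega, pow_succ, ← mul_assoc]
      · simp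
    rw [hsum]
    exact h

set_option maxHeartbeats 1000000 in
/-- The map `x ↦ A^{r/2} (A^{-t/2} (A+xB)^m A^{-t/2})^k A^{r/2}` is differentiable
(in operator norm) at `x = 0`, with derivative
`A^{r/2} { ∑_{i=1}^{k} A^{(m-t)(k-i)} [A^{-t/2} (∑_{j=1}^{m} A^{m-j} B A^{j-1}) A^{-t/2}]
  A^{(m-t)(i-1)} } A^{r/2}`. -/
theorem stmt_5 {H : Type*} [NormedAddCommGroup H] [InnerProductSpace ℂ H] [CompleteSpace H]
    (A B : H →L[ℂ] H) (hA : 0 ≤ A) (hAinv : IsUnit A) (hB : 0 ≤ B)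
    (m k : ℕ) (hm : 0 < m) (hk : 0 < k)
    (t : ℝ) (ht : t ∈ Set.Icc (0 : ℝ) 1) (r : ℝ) :
    HasDerivAt
      (fun x : ℝ =>
        A ^ (r / 2) * (A ^ (-(t / 2)) * (A + x • B) ^ m * A ^ (-(t / 2))) ^ k * A ^ (r / 2))
      (A ^ (r / 2) *
        (∑ i ∈ Finset.Icc 1 k,
          A ^ (((m : ℝ) - t) * ((k : ℝ) - i)) *
            (A ^ (-(t / 2)) * (∑ j ∈ Finset.Icc 1 m, A ^ (m - j) * B * A ^ (j - 1)) *
              A ^ (-(t / 2))) *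
            A ^ (((m : ℝ) - t) * ((i : ℝ) - 1))) *
        A ^ (r / 2)) 0 := by
  obtain ⟨ht0, ht1⟩ := ht
  have h0 : (0 : NNReal) ∉ spectrum NNReal A := spectrum.zero_notMem NNReal hAinv
  have hmt : (0 : ℝ) ≤ (m : ℝ) - t := by
    have : (1 : ℝ) ≤ (m : ℝ) := by exact_mod_cast hm
    linarith
  set C : H →L[ℂ] H := A ^ (r / 2) with hC
  set D : H →L[ℂ] H := A ^ (-(t / 2)) with hD
  -- the derivative of x ↦ A + x • B at 0 is B
  have hP : HasDerivAt (fun x : ℝ => A + x • B) B 0 := by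
    simpa using ((hasDerivAt_id (0 : ℝ)).smul_const B).const_add A
  have hPm := hasDerivAt_pow_nc hP m
  have hg := (hPm.const_mul D).mul_const D
  have hgk := hasDerivAt_pow_nc hg k
  have hfin := (hgk.const_mul C).mul_const C
  simp only [zero_smul, add_zero] at hfin
  -- identify the two expressions for the derivative
  have hAm : (A : H →L[ℂ] H) ^ m = A ^ ((m : ℝ)) := (CFC.rpow_natCast A m hA).symm
  have hQ : D * A ^ m * D = A ^ ((m : ℝ) - t) := by
    rw [hD, hAm, ← CFC.rpow_add hAinv, ← CFC.rpow_add hAinv,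
      show -(t / 2) + (m : ℝ) + -(t / 2) = (m : ℝ) - t by ring]
  have hQpow : ∀ n : ℕ, (A ^ ((m : ℝ) - t)) ^ n = A ^ (((m : ℝ) - t) * n) := by
    intro n
    rw [← CFC.rpow_natCast (A ^ ((m : ℝ) - t)) n CFC.rpow_nonneg,
      CFC.rpow_rpow_of_exponent_nonneg A _ _ hmt (Nat.cast_nonneg n) hA]
  -- the inner sums agree
  have hS : (∑ j ∈ Finset.Icc 1 m, A ^ (m - j) * B * A ^ (j - 1))
      = ∑ i ∈ Finset.range m, A ^ i * B * A ^ (m - 1 - i) := by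
    refine Finset.sum_nbij' (fun j => m - j) (fun i => m - i) ?_ ?_ ?_ ?_ ?_
    · intro a ha; simp only [Finset.mem_Icc] at ha; simp only [Finset.mem_range]; omega
    · intro a ha; simp only [Finset.mem_range] at ha; simp only [Finset.mem_Icc]; omega
    · intro a ha; simp only [Finset.mem_Icc] at ha; omega
    · intro a ha; simp only [Finset.mem_range] at ha; omega
    · intro a ha
      simp only [Finset.mem_Icc] at ha
      rw [show m - 1 - (m - a) = a - 1 by omega]
  -- the outer sums agree
  have hOuter : (∑ i ∈ Finset.Icc 1 k,
        A ^ (((m : ℝ) - t) * ((k : ℝ) - i)) *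
          (D * (∑ j ∈ Finset.Icc 1 m, A ^ (m - j) * B * A ^ (j - 1)) * D) *
          A ^ (((m : ℝ) - t) * ((i : ℝ) - 1)))
      = ∑ i ∈ Finset.range k,
          (D * A ^ m * D) ^ i *
            (D * (∑ i ∈ Finset.range m, A ^ i * B * A ^ (m - 1 - i)) * D) *
            (D * A ^ m * D) ^ (k - 1 - i) := by
    rw [hS, hQ]
    refine Finset.sum_nbij' (fun i => k - i) (fun i => k - i) ?_ ?_ ?_ ?_ ?_
    · intro a ha; simp only [Finset.mem_Icc] at ha; simp only [Finset.mem_range]; omega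
    · intro a ha; simp only [Finset.mem_range] at ha; simp only [Finset.mem_Icc]; omega
    · intro a ha; simp only [Finset.mem_Icc] at ha; omega
    · intro a ha; simp only [Finset.mem_range] at ha; omega
    · intro a ha
      simp only [Finset.mem_Icc] at ha
      rw [hQpow, hQpow,
        show ((m : ℝ) - t) * ((k : ℝ) - (a : ℝ)) = ((m : ℝ) - t) * ((k - a : ℕ) : ℝ) by
          push_cast [Nat.cast_sub ha.2]; ring,
        show ((m : ℝ) - t) * ((a : ℝ) - 1) = ((m : ℝ) - t) * ((k - 1 - (k - a) : ℕ) : ℝ) by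
          have h1 : (k - 1 - (k - a) : ℕ) = a - 1 := by omega
          rw [h1, Nat.cast_sub ha.1]; push_cast; ring]
  rw [hOuter]
  exact hfin
end

section
/- Let A be an l×l Hermitian positive definite complex matrix and let n be a positive integer. Then for every l×l complex matrix Y there exists a unique l×l complex matrix X satisfying Σ_{j=1}^{n} A^{n-j} X A^{j-1} = Y. -/
open scoped ComplexOrder

section Aux
open Matrix

open scoped MatrixOrder in
private noncomputable def Matrix.PosSemidef.sqrt {l : ℕ} {A : Matrix (Fin l) (Fin l) ℂ}
    (_hA : A.PosSemidef) : Matrix (Fin l) (Fin l) ℂ := CFC.sqrt A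

open scoped MatrixOrder in
private lemma Matrix.PosSemidef.posSemidef_sqrt {l : ℕ} {A : Matrix (Fin l) (Fin l) ℂ}
    (hA : A.PosSemidef) : hA.sqrt.PosSemidef := (CFC.sqrt_nonneg A).posSemidef

open scoped MatrixOrder in
private lemma Matrix.PosSemidef.sqrt_mul_self {l : ℕ} {A : Matrix (Fin l) (Fin l) ℂ}
    (hA : A.PosSemidef) : hA.sqrt * hA.sqrt = A := CFC.sqrt_mul_sqrt_self A hA.nonneg

private lemma trace_ctm_nonneg {l : ℕ}
    (M : Matrix (Fin l) (Fin l) ℂ) : 0 ≤ (Mᴴ * M).trace := by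
  rw [Matrix.trace]
  refine Finset.sum_nonneg fun j _ => ?_
  rw [Matrix.diag_apply, Matrix.mul_apply]
  exact Finset.sum_nonneg fun i _ => by
    rw [Matrix.conjTranspose_apply]; exact star_mul_self_nonneg _

private lemma eq_zero_of_trace_ctm {l : ℕ}
    (M : Matrix (Fin l) (Fin l) ℂ) (h : (Mᴴ * M).trace = 0) : M = 0 := by
  rw [Matrix.trace] at h
  have h2 : ∀ j ∈ Finset.univ, (0:ℂ) ≤ (Mᴴ * M).diag j := fun j _ => by
    rw [Matrix.diag_apply, Matrix.mul_apply]
    exact Finset.sum_nonneg fun i _ => by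
      rw [Matrix.conjTranspose_apply]; exact star_mul_self_nonneg _
  have h3 := (Finset.sum_eq_zero_iff_of_nonneg h2).mp h
  ext i j
  have h4 := h3 j (Finset.mem_univ j)
  rw [Matrix.diag_apply, Matrix.mul_apply] at h4
  have h5 : ∀ k ∈ Finset.univ, (0:ℂ) ≤ Mᴴ j k * M k j := fun k _ => by
    rw [Matrix.conjTranspose_apply]; exact star_mul_self_nonneg _
  have h6 := (Finset.sum_eq_zero_iff_of_nonneg h5).mp h4 i (Finset.mem_univ i)
  rw [Matrix.conjTranspose_apply] at h6
  simpa using (star_eq_zero.mp (by simpa using mul_self_eq_zero.mp (by simpa using h6)))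

private lemma trace_term_eq {l : ℕ} {A : Matrix (Fin l) (Fin l) ℂ} (X : Matrix (Fin l) (Fin l) ℂ)
    (hA : A.PosSemidef) (a b : ℕ) :
    (Xᴴ * (A ^ a * X * A ^ b)).trace =
      (((hA.pow a).sqrt * X * (hA.pow b).sqrt)ᴴ *
        ((hA.pow a).sqrt * X * (hA.pow b).sqrt)).trace := by
  set S := (hA.pow a).sqrt with hS
  set T := (hA.pow b).sqrt with hT
  have hSH : Sᴴ = S := (hA.pow a).posSemidef_sqrt.1
  have hTH : Tᴴ = T := (hA.pow b).posSemidef_sqrt.1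
  have hSS : S * S = A ^ a := (hA.pow a).sqrt_mul_self
  have hTT : T * T = A ^ b := (hA.pow b).sqrt_mul_self
  have e1 : (S * X * T)ᴴ * (S * X * T) = T * (Xᴴ * A ^ a * X * T) := by
    rw [Matrix.conjTranspose_mul, Matrix.conjTranspose_mul, hSH, hTH, ← hSS]
    simp only [Matrix.mul_assoc]
  have e3 : Xᴴ * A ^ a * X * T * T = Xᴴ * (A ^ a * X * A ^ b) := by
    simp only [Matrix.mul_assoc, hTT]
  rw [e1, Matrix.trace_mul_comm T, e3]

private lemma sum_map_injective {l : ℕ} {A : Matrix (Fin l) (Fin l) ℂ} (hA : A.PosDef)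
    {n : ℕ} (hn : 0 < n) (X : Matrix (Fin l) (Fin l) ℂ)
    (h : ∑ j ∈ Finset.Icc 1 n, A ^ (n - j) * X * A ^ (j - 1) = 0) : X = 0 := by
  have key : ∑ j ∈ Finset.Icc 1 n, (Xᴴ * (A ^ (n - j) * X * A ^ (j - 1))).trace = 0 := by
    rw [← Matrix.trace_sum, ← Finset.mul_sum, h, Matrix.mul_zero, Matrix.trace_zero]
  have hnn : ∀ j ∈ Finset.Icc 1 n, (0:ℂ) ≤ (Xᴴ * (A ^ (n - j) * X * A ^ (j - 1))).trace := by
    intro j _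
    rw [trace_term_eq X hA.posSemidef]
    exact trace_ctm_nonneg _
  have hz := (Finset.sum_eq_zero_iff_of_nonneg hnn).mp key 1 (by
    simp only [Finset.mem_Icc]; omega)
  rw [trace_term_eq X hA.posSemidef] at hz
  have hzero := eq_zero_of_trace_ctm _ hz
  -- hzero : S * X * T = 0 with S = sqrt (A ^ (n-1)), T = sqrt (A ^ 0)
  set S := (hA.posSemidef.pow (n - 1)).sqrt with hS
  set T := (hA.posSemidef.pow (1 - 1)).sqrt with hT
  have hSS : S * S = A ^ (n - 1) := (hA.posSemidef.pow (n - 1)).sqrt_mul_self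
  have hTT : T * T = A ^ (1 - 1) := (hA.posSemidef.pow (1 - 1)).sqrt_mul_self
  have h2 : A ^ (n - 1) * X * A ^ (1 - 1) = 0 := by
    have := congrArg (fun M => S * M * T) hzero
    simp only [Matrix.mul_zero, Matrix.zero_mul] at this
    calc A ^ (n - 1) * X * A ^ (1 - 1) = S * (S * X * T) * T := by
          rw [← hSS, ← hTT]; simp only [Matrix.mul_assoc]
      _ = 0 := by rw [hzero, Matrix.mul_zero, Matrix.zero_mul]
  simp only [Nat.sub_self, pow_zero, Matrix.mul_one] at h2
  have hdet : IsUnit (A ^ (n - 1)).det := by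
    rw [Matrix.det_pow]; exact (hA.det_pos.ne').isUnit.pow _
  calc X = (A ^ (n - 1))⁻¹ * (A ^ (n - 1) * X) := by
        rw [← Matrix.mul_assoc, Matrix.nonsing_inv_mul _ hdet, Matrix.one_mul]
    _ = 0 := by rw [h2, Matrix.mul_zero]

end Aux

/-- For a Hermitian positive definite `l × l` matrix `A` and any matrix `Y`, the matrix
equation `∑_{j=1}^{n} A^{n-j} X A^{j-1} = Y` has a unique solution `X`. -/
theorem stmt_9 (l : ℕ) (A : Matrix (Fin l) (Fin l) ℂ) (hA : A.PosDef)
    (n : ℕ) (hn : 0 < n) (Y : Matrix (Fin l) (Fin l) ℂ) :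
    ∃! X : Matrix (Fin l) (Fin l) ℂ,
      ∑ j ∈ Finset.Icc 1 n, A ^ (n - j) * X * A ^ (j - 1) = Y := by
  set f : Matrix (Fin l) (Fin l) ℂ →ₗ[ℂ] Matrix (Fin l) (Fin l) ℂ :=
    { toFun := fun X => ∑ j ∈ Finset.Icc 1 n, A ^ (n - j) * X * A ^ (j - 1)
      map_add' := fun X Z => by
        simp only [Matrix.mul_add, Matrix.add_mul, Finset.sum_add_distrib]
      map_smul' := fun c X => by
        simp only [Matrix.mul_smul, Matrix.smul_mul, Finset.smul_sum, RingHom.id_apply] } with hf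
  have hinj : Function.Injective f := by
    rw [← LinearMap.ker_eq_bot, LinearMap.ker_eq_bot']
    intro X hX
    exact sum_map_injective hA hn X hX
  have hsurj : Function.Surjective f := LinearMap.injective_iff_surjective.mp hinj
  obtain ⟨X, hX⟩ := hsurj Y
  exact ⟨X, hX, fun Z hZ => hinj (hZ.trans hX.symm)⟩
end

section
/- Let A = diag(1, 2) and let B be the 2×2 matrix all of whose entries equal 1. Define the 2×2 matrix X = [[2, (3 + 6·2^{1/2})/(1 + 2·2^{3/4})], [(3 + 6·2^{1/2})/(1 + 2·2^{3/4}), 2·2^{3/4}]]. Then X satisfies the matrix equation A^{7/4} X + X A^{7/4} = A^{5/2} B + A^{3/2} B A + A B A^{3/2} + B A^{5/2}, but X is not positive semidefinite (X has a negative eigenvalue). In particular, there is no positive semidefinite 2×2 matrix solving this equation. -/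
open scoped ComplexOrder

/-- Real powers of `A = diag(1, 2)` (entrywise real powers, as a complex matrix). -/
noncomputable def Apow12 (u : ℝ) : Matrix (Fin 2) (Fin 2) ℂ :=
  Matrix.diagonal ![1, ((((2 : ℝ) ^ u) : ℝ) : ℂ)]

/-- The `2 × 2` all-ones matrix. -/
def B12 : Matrix (Fin 2) (Fin 2) ℂ := Matrix.of fun _ _ => 1

/-- The off-diagonal entry `(3 + 6·2^{1/2}) / (1 + 2·2^{3/4})`. -/
noncomputable def c12 : ℝ :=
  (3 + 6 * (2 : ℝ) ^ ((1 : ℝ) / 2)) / (1 + 2 * (2 : ℝ) ^ ((3 : ℝ) / 4))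

/-- The matrix `X = [[2, c], [c, 2·2^{3/4}]]`. -/
noncomputable def X12 : Matrix (Fin 2) (Fin 2) ℂ :=
  !![(2 : ℂ), (c12 : ℂ); (c12 : ℂ), (((2 * (2 : ℝ) ^ ((3 : ℝ) / 4)) : ℝ) : ℂ)]

/-! ### Auxiliary lemmas -/

noncomputable def t12 : ℝ := (2:ℝ) ^ ((1:ℝ)/4)

lemma t12_pos : 0 < t12 := Real.rpow_pos_of_pos (by norm_num) _

lemma t12_rw (k : ℕ) : (2:ℝ) ^ ((k:ℝ)/4) = t12 ^ k := by
  rw [t12, ← Real.rpow_natCast ((2:ℝ) ^ ((1:ℝ)/4)) k, ← Real.rpow_mul (by norm_num)]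
  ring_nf

lemma t12_pow4 : t12 ^ 4 = 2 := by
  have := (t12_rw 4).symm; rw [this]; norm_num

lemma h12' : (2:ℝ) ^ ((1:ℝ)/2) = t12 ^ 2 := by have := t12_rw 2; norm_num at this; exact this
lemma h34' : (2:ℝ) ^ ((3:ℝ)/4) = t12 ^ 3 := by have := t12_rw 3; norm_num at this; exact this
lemma h32' : (2:ℝ) ^ ((3:ℝ)/2) = t12 ^ 6 := by have := t12_rw 6; norm_num at this; exact this
lemma h52' : (2:ℝ) ^ ((5:ℝ)/2) = t12 ^ 10 := by have := t12_rw 10; norm_num at this; exact this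
lemma h74' : (2:ℝ) ^ ((7:ℝ)/4) = t12 ^ 7 := by have := t12_rw 7; norm_num at this; exact this

lemma den_pos : 0 < 1 + 2 * (2:ℝ) ^ ((3:ℝ)/4) := by positivity

lemma c12_eq : c12 * (1 + 2 * (2:ℝ) ^ ((3:ℝ)/4)) = 3 + 6 * (2:ℝ) ^ ((1:ℝ)/2) := by
  rw [c12, div_mul_cancel₀ _ (ne_of_gt den_pos)]

lemma offdiag_real :
    c12 + c12 * (2:ℝ) ^ ((7:ℝ)/4) = 3 + (2:ℝ) ^ ((3:ℝ)/2) + (2:ℝ) ^ ((5:ℝ)/2) := by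
  have h := c12_eq
  rw [h12', h34', h74', h32', h52'] at *
  linear_combination h + (c12*t12^3 - t12^2 - t12^2*(t12^4+2)) * t12_pow4

lemma diag_real :
    (2:ℝ) ^ ((7:ℝ)/4) * (2 * (2:ℝ) ^ ((3:ℝ)/4)) + 2 * (2:ℝ) ^ ((3:ℝ)/4) * (2:ℝ) ^ ((7:ℝ)/4)
    = (2:ℝ) ^ ((5:ℝ)/2) + (2:ℝ) ^ ((3:ℝ)/2) * 2 + 2 * (2:ℝ) ^ ((3:ℝ)/2) + (2:ℝ) ^ ((5:ℝ)/2) := by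
  rw [h34', h74', h32', h52']
  linear_combination (2*t12^6) * t12_pow4

lemma t12_gt1 : 1 < t12 := by
  nlinarith [t12_pow4, t12_pos, sq_nonneg (t12 - 1), sq_nonneg (t12 + 1),
    sq_nonneg (t12^2 - 1), sq_nonneg (t12^2 + 1)]

lemma t12_lt : t12 < 1.2 := by
  nlinarith [t12_pow4, t12_pos, sq_nonneg (t12 - 1.2), sq_nonneg (t12 + 1.2),
    sq_nonneg (t12^2 - 1.44), sq_nonneg (t12^2 + 1.44)]

lemma key12 : (3 + 6 * t12^2)^2 > 4 * t12^3 * (1 + 2*t12^3)^2 := by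
  nlinarith [t12_pow4, t12_pos, t12_gt1, t12_lt, sq_nonneg (t12-1.2),
    mul_pos (mul_pos t12_pos t12_pos) t12_pos, sq_nonneg (t12^2-1.44)]

lemma c12_sq : c12 ^ 2 > 4 * (2:ℝ) ^ ((3:ℝ)/4) := by
  have h := c12_eq
  rw [h12', h34'] at *
  have hD : (0:ℝ) < 1 + 2*t12^3 := by have := pow_pos t12_pos 3; linarith
  have hsq : (c12 * (1 + 2*t12^3))^2 = (3 + 6*t12^2)^2 := by rw [h]
  nlinarith [hsq, key12, mul_pos hD hD, sq_nonneg (1 + 2*t12^3)]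

lemma eq12 :
    Apow12 (7 / 4) * X12 + X12 * Apow12 (7 / 4) =
      Apow12 (5 / 2) * B12 + Apow12 (3 / 2) * B12 * Apow12 1 +
        Apow12 1 * B12 * Apow12 (3 / 2) + B12 * Apow12 (5 / 2) := by
  ext i j
  fin_cases i <;> fin_cases j <;>
    simp [Apow12, B12, X12, Matrix.diagonal_mul, Matrix.mul_diagonal, Matrix.add_apply,
      Matrix.vecMul_diagonal]
  · norm_num
  · have h := congrArg Complex.ofReal offdiag_real; push_cast at h ⊢; linear_combination h
  · have h := congrArg Complex.ofReal offdiag_real; push_cast at h ⊢; linear_combination h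
  · have h := congrArg Complex.ofReal diag_real; push_cast at h ⊢; linear_combination h

lemma not_psd12 : ¬ X12.PosSemidef := by
  intro hpsd
  have h := hpsd.dotProduct_mulVec_nonneg ![(c12:ℂ), -2]
  have hval : dotProduct (star ![(c12:ℂ), -2]) (X12.mulVec ![(c12:ℂ), -2]) =
      (((8 * (2:ℝ)^((3:ℝ)/4) - 2 * c12^2 : ℝ)) : ℂ) := by
    simp [X12, dotProduct, Matrix.mulVec, Fin.sum_univ_two, map_ofNat]
    ring
  rw [hval] at h
  have h' : (0:ℝ) ≤ 8 * (2:ℝ)^((3:ℝ)/4) - 2 * c12^2 := by exact_mod_cast h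
  nlinarith [c12_sq]

lemma unique12 (X : Matrix (Fin 2) (Fin 2) ℂ)
    (hX : Apow12 (7 / 4) * X + X * Apow12 (7 / 4) =
      Apow12 (5 / 2) * B12 + Apow12 (3 / 2) * B12 * Apow12 1 +
        Apow12 1 * B12 * Apow12 (3 / 2) + B12 * Apow12 (5 / 2)) : X = X12 := by
  have h : Apow12 (7 / 4) * X + X * Apow12 (7 / 4) =
      Apow12 (7 / 4) * X12 + X12 * Apow12 (7 / 4) := by rw [hX, eq12]
  have ha : (0:ℝ) < (2:ℝ) ^ ((7:ℝ)/4) := Real.rpow_pos_of_pos (by norm_num) _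
  have hne : ((((2:ℝ) ^ ((7:ℝ)/4) : ℝ)) : ℂ) + 1 ≠ 0 := by
    intro hc
    have hc2 : (((1 + (2:ℝ) ^ ((7:ℝ)/4) : ℝ)) : ℂ) = ((0:ℝ) : ℂ) := by
      push_cast
      linear_combination hc
    have := Complex.ofReal_injective hc2
    nlinarith [ha]
  have hne2 : (2:ℂ) * ((((2:ℝ) ^ ((7:ℝ)/4) : ℝ)) : ℂ) ≠ 0 := by
    have : ((((2:ℝ) ^ ((7:ℝ)/4) : ℝ)) : ℂ) ≠ 0 := Complex.ofReal_ne_zero.mpr (ne_of_gt ha)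
    simp [this]
  ext i j
  have hij := congrFun (congrFun h i) j
  fin_cases i <;> fin_cases j <;>
    simp [Apow12, Matrix.diagonal_mul, Matrix.mul_diagonal, Matrix.add_apply,
      Matrix.mul_apply, Fin.sum_univ_two, Matrix.diagonal] at hij ⊢ <;>
    rw [show ((7:ℝ)/4 : ℝ) = 7/4 from by norm_num] at *
  · linear_combination hij / 2
  · have hfac : (X 0 1 - X12 0 1) * (((((2:ℝ) ^ ((7:ℝ)/4) : ℝ)) : ℂ) + 1) = 0 := by
      rw [show ((7:ℝ)/4 : ℝ) = 7/4 from by norm_num]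
      linear_combination hij
    rcases mul_eq_zero.mp hfac with h' | h'
    · linear_combination h'
    · exact absurd h' hne
  · have hfac : (X 1 0 - X12 1 0) * (((((2:ℝ) ^ ((7:ℝ)/4) : ℝ)) : ℂ) + 1) = 0 := by
      rw [show ((7:ℝ)/4 : ℝ) = 7/4 from by norm_num]
      linear_combination hij
    rcases mul_eq_zero.mp hfac with h' | h'
    · linear_combination h'
    · exact absurd h' hne
  · have hfac : (X 1 1 - X12 1 1) * ((2:ℂ) * ((((2:ℝ) ^ ((7:ℝ)/4) : ℝ)) : ℂ)) = 0 := by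
      rw [show ((7:ℝ)/4 : ℝ) = 7/4 from by norm_num]
      linear_combination hij
    rcases mul_eq_zero.mp hfac with h' | h'
    · linear_combination h'
    · exact absurd h' hne2

/-- Remark 2.2: `X12` solves
`A^{7/4} X + X A^{7/4} = A^{5/2} B + A^{3/2} B A + A B A^{3/2} + B A^{5/2}`
but is not positive semidefinite; in particular, no positive semidefinite matrix solves
this equation. -/
theorem stmt_12 :
    (Apow12 (7 / 4) * X12 + X12 * Apow12 (7 / 4) =
      Apow12 (5 / 2) * B12 + Apow12 (3 / 2) * B12 * Apow12 1 +
        Apow12 1 * B12 * Apow12 (3 / 2) + B12 * Apow12 (5 / 2)) ∧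
    ¬ X12.PosSemidef ∧
    ¬ ∃ X : Matrix (Fin 2) (Fin 2) ℂ, X.PosSemidef ∧
        Apow12 (7 / 4) * X + X * Apow12 (7 / 4) =
          Apow12 (5 / 2) * B12 + Apow12 (3 / 2) * B12 * Apow12 1 +
            Apow12 1 * B12 * Apow12 (3 / 2) + B12 * Apow12 (5 / 2) := by
  refine ⟨eq12, not_psd12, ?_⟩
  rintro ⟨X, hpsd, hXeq⟩
  rw [unique12 X hXeq] at hpsd
  exact not_psd12 hpsd
end
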